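/- For all partial Boolean functions f and g and every ε ∈ [0, 1/2), R̄_ε(f ∘ g) ≥ R̄_ε(f) · RS(g). -/

import Mathlib

/-! ### Decision trees -/

/-- A deterministic decision tree querying positions of type `ι`, receiving answers
in `α`, and producing an output in `β`. -/
inductive DTree (ι α β : Type) : Type
  | leaf (b : β) : DTree ι α β
  | node (i : ι) (next : α → DTree ι α β) : DTree ι α β

namespace DTree

variable {ι α β : Type}

/-- The output of a decision tree on input `x`. -/
def output : DTree ι α β → (ι → α) → β
  | leaf b, _ => b
  | node i next, x => (next (x i)).output x

/-- The number of queries made by a decision tree on input `x`. -/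
def cost : DTree ι α β → (ι → α) → ℕ
  | leaf _, _ => 0
  | node i next, x => (next (x i)).cost x + 1

/-- The set of positions queried by a decision tree on input `x`. -/
def queries : DTree ι α β → (ι → α) → Set ι
  | leaf _, _ => ∅
  | node i next, x => insert i ((next (x i)).queries x)

end DTree

/-- A partial function on inputs `ι → α` with outputs in `β`; `none` means undefined
(the domain is the set of inputs mapped to `some` value). -/
abbrev PFn (ι α β : Type) := (ι → α) → Option β

/-- `t` computes the partial function `f` (correct on every input of the domain). -/
def DTree.computesP {ι α β : Type} (t : DTree ι α β) (f : PFn ι α β) : Prop :=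
  ∀ x b, f x = some b → t.output x = b

/-- Deterministic query complexity `D(f)`. -/
noncomputable def Dq {ι α β : Type} (f : PFn ι α β) : ℝ :=
  sInf {T : ℝ | 0 ≤ T ∧ ∃ t : DTree ι α β, t.computesP f ∧ ∀ x, (t.cost x : ℝ) ≤ T}

/-! ### Randomized query algorithms -/

/-- A randomized query algorithm: a finitely supported probability distribution over
deterministic decision trees. -/
structure RandAlg (ι α β : Type) where
  Ω : Type
  [fin : Fintype Ω]
  p : Ω → ℝ
  nonneg : ∀ ω, 0 ≤ p ω
  sum_one : ∑ ω, p ω = 1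
  tree : Ω → DTree ι α β

namespace RandAlg

variable {ι α β : Type}

/-- Expected number of queries of `A` on input `x`. -/
noncomputable def expCost (A : RandAlg ι α β) (x : ι → α) : ℝ :=
  letI := A.fin
  ∑ ω, A.p ω * ((A.tree ω).cost x : ℝ)

open Classical in
/-- Probability that `A` outputs `b` on input `x`. -/
noncomputable def succProb (A : RandAlg ι α β) (x : ι → α) (b : β) : ℝ :=
  letI := A.fin
  ∑ ω, if (A.tree ω).output x = b then A.p ω else 0

/-- `A` computes `f` with error at most `ε`: on every input of the domain the correct
output is produced with probability at least `1 - ε`. -/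
def Computes (A : RandAlg ι α β) (f : PFn ι α β) (ε : ℝ) : Prop :=
  ∀ x b, f x = some b → 1 - ε ≤ A.succProb x b

/-- The worst-case cost of `A` (over all inputs and all trees in the support) is at most `T`. -/
def WCostLe (A : RandAlg ι α β) (T : ℝ) : Prop :=
  ∀ ω, A.p ω ≠ 0 → ∀ x, ((A.tree ω).cost x : ℝ) ≤ T

/-- The expected cost of `A` on every input of the domain of `f` is at most `T`. -/
def ECostLe (A : RandAlg ι α β) (f : PFn ι α β) (T : ℝ) : Prop :=
  ∀ x, (f x).isSome → A.expCost x ≤ T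

end RandAlg

/-- `R_ε(f)`: minimum worst-case cost of an `ε`-error randomized algorithm for `f`. -/
noncomputable def Rw {ι α β : Type} (ε : ℝ) (f : PFn ι α β) : ℝ :=
  sInf {T : ℝ | 0 ≤ T ∧ ∃ A : RandAlg ι α β, A.Computes f ε ∧ A.WCostLe T}

/-- `R̄_ε(f)`: minimum expected cost of an `ε`-error randomized algorithm for `f`. -/
noncomputable def Rbar {ι α β : Type} (ε : ℝ) (f : PFn ι α β) : ℝ :=
  sInf {T : ℝ | 0 ≤ T ∧ ∃ A : RandAlg ι α β, A.Computes f ε ∧ A.ECostLe f T}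

/-- `R₀(f)`: zero-error expected randomized query complexity. -/
noncomputable def R0 {ι α β : Type} (f : PFn ι α β) : ℝ := Rbar 0 f

/-- `R(f) := R_{1/3}(f)`: bounded-error randomized query complexity. -/
noncomputable def Rb {ι α β : Type} (f : PFn ι α β) : ℝ := Rw (1/3) f

/-- The total function `f` viewed as a partial function. -/
def tot {ι α β : Type} (f : (ι → α) → β) : PFn ι α β := fun x => some (f x)


/-! ### Sabotage complexity and composition -/

/-- The four-letter alphabet `{0, 1, *, †}` of sabotaged inputs. -/
inductive Sab : Type
  | zero : Sab
  | one : Sab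
  | star : Sab
  | dagger : Sab
deriving DecidableEq

/-- Embedding of Boolean values into the sabotage alphabet. -/
def Sab.ofBool : Bool → Sab
  | false => Sab.zero
  | true => Sab.one

/-- `p` is consistent with the Boolean input `x`: wherever `p` has a Boolean entry,
it agrees with `x`. -/
def SabConsistent {ι : Type} (p : ι → Sab) (x : ι → Bool) : Prop :=
  ∀ i, p i = Sab.ofBool (x i) ∨ p i = Sab.star ∨ p i = Sab.dagger

/-- `p` is a sabotaged input for `f` using the sabotage symbol `s`: all entries of `p`
lie in `{0, 1, s}` and `p` is consistent with both a `0`-input and a `1`-input of `f`. -/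
def IsSabotaged {ι : Type} (f : PFn ι Bool Bool) (s : Sab) (p : ι → Sab) : Prop :=
  (∀ i, p i = Sab.zero ∨ p i = Sab.one ∨ p i = s) ∧
  ∃ x y, (f x).isSome ∧ (f y).isSome ∧ f x ≠ f y ∧ SabConsistent p x ∧ SabConsistent p y

open Classical in
/-- The sabotage problem `f_sab` associated with `f`: it is `0` on `P_f` (inputs
sabotaged with `*`) and `1` on `P_f†` (inputs sabotaged with `†`). -/
noncomputable def fsab {ι : Type} (f : PFn ι Bool Bool) : PFn ι Sab Bool :=
  fun p =>
    if IsSabotaged f Sab.star p then some false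
    else if IsSabotaged f Sab.dagger p then some true
    else none

open Classical in
/-- `f_usab`: the restriction of `f_sab` to inputs having exactly one `*` or `†` entry. -/
noncomputable def fusab {ι : Type} (f : PFn ι Bool Bool) : PFn ι Sab Bool :=
  fun p =>
    if ∃! i, p i = Sab.star ∨ p i = Sab.dagger then fsab f p else none

/-- Randomized sabotage complexity `RS(f) := R₀(f_sab)`. -/
noncomputable def RS {ι : Type} (f : PFn ι Bool Bool) : ℝ := R0 (fsab f)

/-- `RS_u(f) := R₀(f_usab)` (this is `0` automatically when `f_usab` has empty domain). -/
noncomputable def RSu {ι : Type} (f : PFn ι Bool Bool) : ℝ := R0 (fusab f)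

open Classical in
/-- Composition `f ∘ g` of partial functions: defined on an input exactly when every
inner copy of `g` is defined and the tuple of inner values lies in the domain of `f`. -/
noncomputable def pcomp {κ ι α β γ : Type} (f : PFn κ β γ) (g : PFn ι α β) :
    PFn (κ × ι) α γ :=
  fun x =>
    if h : ∀ i : κ, (g fun j => x (i, j)).isSome then
      f fun i => (g fun j => x (i, j)).get (h i)
    else none

/-- Index types for iterated self-composition. -/
def IterIdx (κ : Type) : ℕ → Type
  | 0 => κ
  | n + 1 => κ × IterIdx κ n

/-- `iterComp f n` is `f` composed with itself `n + 1` times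
(`iterComp f 0 = f`, `iterComp f (n+1) = f ∘ iterComp f n`). -/
noncomputable def iterComp {κ : Type} (f : PFn κ Bool Bool) : (n : ℕ) → PFn (IterIdx κ n) Bool Bool
  | 0 => f
  | n + 1 => pcomp f (iterComp f n)

/-! ### The index function -/

/-- The value of a bit-string read as a binary number (bit `i` has weight `2^i`). -/
def binval {b : ℕ} (x : Fin b → Bool) : ℕ := ∑ i, if x i then 2 ^ (i : ℕ) else 0

theorem sum_range_two_pow (b : ℕ) : ∑ i ∈ Finset.range b, 2 ^ i = 2 ^ b - 1 := by
  induction b with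
  | zero => simp
  | succ n ih =>
    rw [Finset.sum_range_succ, ih, pow_succ]
    have : 1 ≤ 2 ^ n := Nat.one_le_two_pow
    omega

theorem binval_lt {b : ℕ} (x : Fin b → Bool) : binval x < 2 ^ b := by
  have h1 : binval x ≤ ∑ i : Fin b, 2 ^ (i : ℕ) := by
    refine Finset.sum_le_sum fun i _ => ?_
    split <;> simp
  have h2 : ∑ i : Fin b, 2 ^ (i : ℕ) = 2 ^ b - 1 := by
    rw [Fin.sum_univ_eq_sum_range (fun i => 2 ^ i) b]
    exact sum_range_two_pow b
  have h3 : 0 < 2 ^ b := Nat.pow_pos (by norm_num)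
  omega

/-- The largest `c` with `c + 2^c ≤ m`. -/
def indexC (m : ℕ) : ℕ := Nat.findGreatest (fun c => c + 2 ^ c ≤ m) m

/-- The index function `Ind_m : {0,1}^m → {0,1}`: the first `c` bits (where `c` is the
largest integer with `c + 2^c ≤ m`) are read as a binary address `y` into the next
`2^c` bits, and the output is the addressed bit. -/
def IndFn (m : ℕ) : PFn (Fin m) Bool Bool :=
  fun x =>
    let c := indexC m
    let y := ∑ i : Fin m, if (i : ℕ) < c ∧ x i = true then 2 ^ (i : ℕ) else 0
    if h : c + y < m then some (x ⟨c + y, h⟩) else none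

/-- `f^{⊕c}_ind`: the index function on `c + 2^c` bits with `f` composed into each of
the `c` address bits only. -/
def findex {n : ℕ} (f : PFn (Fin n) Bool Bool) (c : ℕ) :
    PFn ((Fin c × Fin n) ⊕ Fin (2 ^ c)) Bool Bool :=
  fun x =>
    if h : ∀ i : Fin c, (f fun j => x (Sum.inl (i, j))).isSome then
      some (x (Sum.inr ⟨binval fun i => (f fun j => x (Sum.inl (i, j))).get (h i),
        binval_lt _⟩))
    else none


/-! ### Auxiliary machinery -/

section Aux

open Finset

instance : Fintype Sab :=
  ⟨{Sab.zero, Sab.one, Sab.star, Sab.dagger}, by intro x; cases x <;> simp⟩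

namespace DTree

variable {ι α β : Type}

/-- Build a tree that queries all the indices in `l` and then applies `F` to the
assembled input (completed by `acc` off `l`). -/
def build [DecidableEq ι] : List ι → ((ι → α) → β) → (ι → α) → DTree ι α β
  | [], F, acc => .leaf (F acc)
  | i :: l, F, acc => .node i fun a => build l F (Function.update acc i a)

theorem build_output [DecidableEq ι] (l : List ι) (F : (ι → α) → β) (acc x : ι → α) :
    (build l F acc).output x = F (fun i => if i ∈ l then x i else acc i) := by
  induction l generalizing acc with
  | nil => simp [build, output]
  | cons i l ih =>
    simp only [build, output, ih]
    congr 1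
    funext j
    by_cases hj : j ∈ l
    · simp [hj]
    · by_cases hji : j = i <;> simp [Function.update, hj, hji]

theorem build_cost [DecidableEq ι] (l : List ι) (F : (ι → α) → β) (acc x : ι → α) :
    (build l F acc).cost x = l.length := by
  induction l generalizing acc with
  | nil => simp [build, cost]
  | cons i l ih => simp [build, cost, ih]

/-- The full tree computing any (partial) function exactly. -/
noncomputable def full [Fintype ι] [DecidableEq ι] [Inhabited α] [Inhabited β]
    (f : PFn ι α β) : DTree ι α β :=
  build Finset.univ.toList (fun x => (f x).getD default) (fun _ => default)

theorem full_output [Fintype ι] [DecidableEq ι] [Inhabited α] [Inhabited β]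
    (f : PFn ι α β) (x : ι → α) : (full f).output x = (f x).getD default := by
  rw [full, build_output]
  have : (fun i => if i ∈ Finset.univ.toList then x i else default) = x := by
    funext i; simp [Finset.mem_toList]
  rw [this]

theorem full_cost [Fintype ι] [DecidableEq ι] [Inhabited α] [Inhabited β]
    (f : PFn ι α β) (x : ι → α) : (full f).cost x = Fintype.card ι := by
  rw [full, build_cost, Finset.length_toList, Finset.card_univ]

end DTree

/-- The deterministic algorithm given by a single tree. -/
def RandAlg.ofTree {ι α β : Type} (t : DTree ι α β) : RandAlg ι α β where
  Ω := Unit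
  p := fun _ => 1
  nonneg := fun _ => zero_le_one
  sum_one := by simp
  tree := fun _ => t

theorem RandAlg.ofTree_expCost {ι α β : Type} (t : DTree ι α β) (x : ι → α) :
    (RandAlg.ofTree t).expCost x = t.cost x := by
  simp [RandAlg.expCost, RandAlg.ofTree]
  convert one_mul (t.cost x : ℝ)
  rw [Nat.cast_eq_one]
  rfl

theorem RandAlg.ofTree_succProb {ι α β : Type} (t : DTree ι α β) (x : ι → α) (b : β)
    (h : t.output x = b) : (RandAlg.ofTree t).succProb x b = 1 := by
  classical
  simp [RandAlg.succProb, RandAlg.ofTree, h]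
  rfl

/-- The `Rbar` defining set is nonempty (for finite index types). -/
theorem Rbar_set_nonempty {ι α β : Type} [Fintype ι] [DecidableEq ι] [Inhabited α]
    [Inhabited β] (f : PFn ι α β) (ε : ℝ) (hε : 0 ≤ ε) :
    ((Fintype.card ι : ℝ)) ∈
      {T : ℝ | 0 ≤ T ∧ ∃ A : RandAlg ι α β, A.Computes f ε ∧ A.ECostLe f T} := by
  refine ⟨Nat.cast_nonneg _, RandAlg.ofTree (DTree.full f), ?_, ?_⟩
  · intro x b hb
    rw [RandAlg.ofTree_succProb _ x b (by rw [DTree.full_output, hb]; rfl)]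
    linarith
  · intro x _
    rw [RandAlg.ofTree_expCost, DTree.full_cost]

theorem Rbar_nonneg {ι α β : Type} (ε : ℝ) (f : PFn ι α β) : 0 ≤ Rbar ε f :=
  Real.sInf_nonneg (fun _ hx => hx.1)

theorem RS_nonneg {m : ℕ} (g : PFn (Fin m) Bool Bool) : 0 ≤ RS g :=
  Real.sInf_nonneg (fun _ hx => hx.1)

theorem Rbar_bddBelow {ι α β : Type} (ε : ℝ) (f : PFn ι α β) :
    BddBelow {T : ℝ | 0 ≤ T ∧ ∃ A : RandAlg ι α β, A.Computes f ε ∧ A.ECostLe f T} :=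
  ⟨0, fun _ hx => hx.1⟩

end Aux
section SabFacts

variable {m : ℕ} {g : PFn (Fin m) Bool Bool}

theorem Sab.ofBool_ne_star (b : Bool) : Sab.ofBool b ≠ Sab.star := by cases b <;> simp [Sab.ofBool]
theorem Sab.ofBool_ne_dagger (b : Bool) : Sab.ofBool b ≠ Sab.dagger := by cases b <;> simp [Sab.ofBool]
theorem Sab.ofBool_inj {a b : Bool} (h : Sab.ofBool a = Sab.ofBool b) : a = b := by
  cases a <;> cases b <;> simp_all [Sab.ofBool]

theorem isSabotaged_of_fsab_isSome {p : Fin m → Sab} (h : (fsab g p).isSome) :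
    IsSabotaged g Sab.star p ∨ IsSabotaged g Sab.dagger p := by
  by_contra hc
  push_neg at hc
  simp only [fsab] at h
  rw [if_neg hc.1, if_neg hc.2] at h
  simp at h

theorem exists_consistent {p : Fin m → Sab} (h : (fsab g p).isSome) (b : Bool) :
    ∃ x, g x = some b ∧ SabConsistent p x := by
  have : IsSabotaged g Sab.star p ∨ IsSabotaged g Sab.dagger p := isSabotaged_of_fsab_isSome h
  have hs : ∃ s, IsSabotaged g s p := by rcases this with h | h; exacts [⟨_, h⟩, ⟨_, h⟩]
  obtain ⟨s, _, x, y, hx, hy, hxy, hpx, hpy⟩ := hs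
  obtain ⟨bx, hbx⟩ := Option.isSome_iff_exists.1 hx
  obtain ⟨by', hby⟩ := Option.isSome_iff_exists.1 hy
  have hne : bx ≠ by' := by rintro rfl; exact hxy (hbx.trans hby.symm)
  rcases Bool.eq_or_eq_not b bx with rfl | rfl
  · exact ⟨x, hbx, hpx⟩
  · have hb : (!bx) = by' := by revert hne; cases bx <;> cases by' <;> simp
    rw [← hb] at hby
    exact ⟨y, hby, hpy⟩

open Classical in
/-- A chosen input of `g` with value `b` consistent with the sabotaged input `p`. -/
noncomputable def pick (g : PFn (Fin m) Bool Bool) (p : Fin m → Sab) (b : Bool) :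
    Fin m → Bool :=
  if h : ∃ x, g x = some b ∧ SabConsistent p x then h.choose else fun _ => false

theorem pick_spec {p : Fin m → Sab} (h : (fsab g p).isSome) (b : Bool) :
    g (pick g p b) = some b ∧ SabConsistent p (pick g p b) := by
  have he := exists_consistent h b
  rw [pick, dif_pos he]
  exact he.choose_spec

theorem pick_bit {p : Fin m → Sab} (h : (fsab g p).isSome) (b : Bool) {j : Fin m} {c : Bool}
    (hj : p j = Sab.ofBool c) : pick g p b j = c := by
  have := (pick_spec h b).2 j
  rcases this with h1 | h1 | h1
  · rw [hj] at h1; exact (Sab.ofBool_inj h1.symm)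
  · rw [h1] at hj; exact absurd hj.symm (Sab.ofBool_ne_star c)
  · rw [h1] at hj; exact absurd hj.symm (Sab.ofBool_ne_dagger c)

theorem fsab_star_val {p : Fin m → Sab} {b : Bool} (h : fsab g p = some b)
    {j : Fin m} (hj : p j = Sab.star) : b = false := by
  simp only [fsab] at h
  split_ifs at h with h1 h2
  · exact (Option.some_inj.1 h).symm
  · rcases h2.1 j with hz | hz | hz <;> simp [hj] at hz

theorem fsab_dagger_val {p : Fin m → Sab} {b : Bool} (h : fsab g p = some b)
    {j : Fin m} (hj : p j = Sab.dagger) : b = true := by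
  simp only [fsab] at h
  split_ifs at h with h1 h2
  · rcases h1.1 j with hz | hz | hz <;> simp [hj] at hz
  · exact (Option.some_inj.1 h).symm

end SabFacts
section Hit

instance : Inhabited Sab := ⟨Sab.zero⟩

/-- Is this a sabotage symbol? -/
def sabB : Sab → Bool
  | Sab.star => true
  | Sab.dagger => true
  | _ => false

variable {m : ℕ}

/-- Whether a tree queries a sabotaged position of `p` along its run on `p`. -/
def hitB {β : Type} : DTree (Fin m) Sab β → (Fin m → Sab) → Bool
  | .leaf _, _ => false
  | .node j nx, p => sabB (p j) || hitB (nx (p j)) p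

/-- Real-valued indicator of `hitB`. -/
noncomputable def hitI {β : Type} (t : DTree (Fin m) Sab β) (p : Fin m → Sab) : ℝ :=
  if hitB t p then 1 else 0

theorem hitI_nonneg {β : Type} (t : DTree (Fin m) Sab β) (p : Fin m → Sab) : 0 ≤ hitI t p := by
  rw [hitI]; split <;> norm_num

theorem hitI_le_one {β : Type} (t : DTree (Fin m) Sab β) (p : Fin m → Sab) : hitI t p ≤ 1 := by
  rw [hitI]; split <;> norm_num

/-- Run `t`, but stop and answer as soon as a sabotaged entry is seen; if `t` ends
without seeing one, continue with `k`. -/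
def untilHit : DTree (Fin m) Sab Unit → DTree (Fin m) Sab Bool → DTree (Fin m) Sab Bool
  | .leaf _, k => k
  | .node j nx, k => .node j fun s =>
      match s with
      | Sab.zero => untilHit (nx Sab.zero) k
      | Sab.one => untilHit (nx Sab.one) k
      | Sab.star => .leaf false
      | Sab.dagger => .leaf true

theorem untilHit_output {g : PFn (Fin m) Bool Bool} {p : Fin m → Sab} {b : Bool}
    (hp : fsab g p = some b) (t : DTree (Fin m) Sab Unit) (k : DTree (Fin m) Sab Bool)
    (hk : k.output p = b) : (untilHit t k).output p = b := by
  induction t with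
  | leaf _ => simpa [untilHit] using hk
  | node j nx ih =>
    show DTree.output (.node j _) p = b
    rw [DTree.output]
    cases hpj : p j
    · exact ih _
    · exact ih _
    · rw [fsab_star_val hp hpj]; rfl
    · rw [fsab_dagger_val hp hpj]; rfl

theorem untilHit_cost (t : DTree (Fin m) Sab Unit) (k : DTree (Fin m) Sab Bool)
    (p : Fin m → Sab) :
    ((untilHit t k).cost p : ℝ) ≤ (t.cost p : ℝ) + (1 - hitI t p) * (k.cost p : ℝ) := by
  induction t with
  | leaf _ => simp [untilHit, DTree.cost, hitI, hitB]
  | node j nx ih =>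
    have hk0 : (0:ℝ) ≤ (k.cost p : ℝ) := by positivity
    show ((DTree.node j (fun s => match s with
      | Sab.zero => untilHit (nx Sab.zero) k
      | Sab.one => untilHit (nx Sab.one) k
      | Sab.star => .leaf false
      | Sab.dagger => .leaf true)).cost p : ℝ)
        ≤ ((DTree.node j nx).cost p : ℝ) + (1 - hitI (.node j nx) p) * (k.cost p : ℝ)
    rw [DTree.cost, DTree.cost]
    have hh : hitB (.node j nx) p = (sabB (p j) || hitB (nx (p j)) p) := rfl
    cases hpj : p j <;> rw [hpj] at hh <;> simp only [sabB, Bool.false_or, Bool.true_or] at hh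
    · have e1 : hitI (DTree.node j nx) p = hitI (nx Sab.zero) p := by rw [hitI, hitI, hh]
      have := ih Sab.zero
      push_cast
      rw [e1]; linarith
    · have e1 : hitI (DTree.node j nx) p = hitI (nx Sab.one) p := by rw [hitI, hitI, hh]
      have := ih Sab.one
      push_cast
      rw [e1]; linarith
    · have e1 : hitI (DTree.node j nx) p = 1 := by rw [hitI, hh]; simp
      have h1 : (0:ℝ) ≤ ((nx Sab.star).cost p : ℝ) := by positivity
      rw [e1]
      show (((DTree.leaf false : DTree (Fin m) Sab Bool).cost p + 1 : ℕ) : ℝ) ≤ _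
      rw [DTree.cost]
      push_cast
      linarith
    · have e1 : hitI (DTree.node j nx) p = 1 := by rw [hitI, hh]; simp
      have h1 : (0:ℝ) ≤ ((nx Sab.dagger).cost p : ℝ) := by positivity
      rw [e1]
      show (((DTree.leaf true : DTree (Fin m) Sab Bool).cost p + 1 : ℕ) : ℝ) ≤ _
      rw [DTree.cost]
      push_cast
      linarith

end Hit
section Chain

open Finset

variable {m : ℕ} (g : PFn (Fin m) Bool Bool)

/-- Repeatedly attempt to find a sabotaged entry using the given trees; fall back to
reading the whole input. -/
noncomputable def chain {κ : Type} (T : κ → DTree (Fin m) Sab Unit) :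
    List κ → DTree (Fin m) Sab Bool
  | [] => DTree.full (fsab g)
  | k :: l => untilHit (T k) (chain T l)

theorem chain_output {κ : Type} (T : κ → DTree (Fin m) Sab Unit) (l : List κ)
    {p : Fin m → Sab} {b : Bool} (hp : fsab g p = some b) :
    (chain g T l).output p = b := by
  induction l with
  | nil => rw [chain, DTree.full_output, hp]; rfl
  | cons k l ih => exact untilHit_output hp _ _ ih

theorem geom_aux {q : ℝ} (hq : 0 < q) (hq1 : q ≤ 1) (r : ℕ) :
    ∑ j ∈ Finset.range r, (1 - q) ^ j ≤ 1 / q := by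
  induction r with
  | zero => simp; positivity
  | succ r ih =>
    rw [geom_sum_succ]
    have h0 : (0:ℝ) ≤ 1 - q := by linarith
    have := mul_le_mul_of_nonneg_left ih h0
    have hexp : (1 - q) * (1/q) + 1 = 1/q := by field_simp; ring
    linarith

theorem sum_prod_weights {κ : Type} [Fintype κ] (w : κ → ℝ) (hw1 : ∑ k, w k = 1) (r : ℕ) :
    ∑ σ : Fin r → κ, ∏ s, w (σ s) = 1 := by
  rw [← Fintype.sum_pow w r, hw1, one_pow]

theorem chain_cost_exp {κ : Type} [Fintype κ] (T : κ → DTree (Fin m) Sab Unit)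
    (w : κ → ℝ) (hw0 : ∀ k, 0 ≤ w k) (hw1 : ∑ k, w k = 1) (p : Fin m → Sab) (r : ℕ) :
    ∑ σ : Fin r → κ, (∏ s, w (σ s)) * (((chain g T (List.ofFn σ)).cost p : ℝ))
      ≤ (∑ k, w k * ((T k).cost p : ℝ))
          * (∑ j ∈ Finset.range r, (1 - ∑ k, w k * hitI (T k) p) ^ j)
        + (1 - ∑ k, w k * hitI (T k) p) ^ r * m := by
  set c := ∑ k, w k * ((T k).cost p : ℝ) with hc
  set q := ∑ k, w k * hitI (T k) p with hq
  have hc0 : 0 ≤ c := Finset.sum_nonneg fun k _ => mul_nonneg (hw0 k) (by positivity)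
  have hq1 : q ≤ 1 := by
    rw [hq, ← hw1]
    exact Finset.sum_le_sum fun k _ => by
      have := hitI_le_one (T k) p
      nlinarith [hw0 k, hitI_nonneg (T k) p]
  have hq0 : 0 ≤ q := Finset.sum_nonneg fun k _ => mul_nonneg (hw0 k) (hitI_nonneg _ _)
  induction r with
  | zero =>
    haveI : Subsingleton (Fin 0 → κ) := ⟨fun a b => funext fun i => i.elim0⟩
    rw [Fintype.sum_subsingleton _ (fun i : Fin 0 => (i.elim0 : κ))]
    have h1 : chain g T ([] : List κ) = DTree.full (fsab g) := rfl
    rw [show (List.ofFn fun i : Fin 0 => (i.elim0 : κ)) = ([] : List κ) from List.ofFn_zero,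
      h1, DTree.full_cost, Fintype.card_fin]
    simp
  | succ r ih =>
    set x := 1 - q with hx
    have hx0 : 0 ≤ x := by rw [hx]; linarith
    set Sr := ∑ σ' : Fin r → κ, (∏ s, w (σ' s)) * ((chain g T (List.ofFn σ')).cost p : ℝ)
      with hSr
    set E := c * (∑ j ∈ Finset.range r, x ^ j) + x ^ r * m with hE
    have step : ∀ (k : κ) (σ' : Fin r → κ),
        (∏ s : Fin (r+1), w ((Fin.cons k σ' : Fin (r+1) → κ) s))
            * (((chain g T (List.ofFn (Fin.cons k σ'))).cost p : ℝ))
          = (w k * ∏ s : Fin r, w (σ' s))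
            * ((untilHit (T k) (chain g T (List.ofFn σ'))).cost p : ℝ) := by
      intro k σ'
      have h1 : List.ofFn (Fin.cons k σ' : Fin (r+1) → κ) = k :: List.ofFn σ' := by
        rw [List.ofFn_succ]; simp
      rw [h1, Fin.prod_univ_succ]; simp [chain]
    have main : (∑ σ : Fin (r+1) → κ,
          (∏ s, w (σ s)) * ((chain g T (List.ofFn σ)).cost p : ℝ))
        = ∑ k, ∑ σ' : Fin r → κ, (w k * ∏ s, w (σ' s))
            * ((untilHit (T k) (chain g T (List.ofFn σ'))).cost p : ℝ) := by
      rw [← Equiv.sum_comp (Fin.consEquiv (fun _ : Fin (r+1) => κ))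
          (fun σ : Fin (r+1) → κ =>
            (∏ s, w (σ s)) * ((chain g T (List.ofFn σ)).cost p : ℝ)),
        Fintype.sum_prod_type]
      exact Finset.sum_congr rfl fun k _ => Finset.sum_congr rfl fun σ' _ => step k σ'
    rw [main]
    have inner : ∀ k : κ, (∑ σ' : Fin r → κ, (w k * ∏ s, w (σ' s))
            * ((untilHit (T k) (chain g T (List.ofFn σ'))).cost p : ℝ))
        ≤ w k * ((T k).cost p : ℝ) + w k * (1 - hitI (T k) p) * Sr := by
      intro k
      have hstep : ∀ σ' : Fin r → κ, (w k * ∏ s, w (σ' s))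
            * ((untilHit (T k) (chain g T (List.ofFn σ'))).cost p : ℝ)
          ≤ (w k * ∏ s, w (σ' s)) * (((T k).cost p : ℝ)
              + (1 - hitI (T k) p) * ((chain g T (List.ofFn σ')).cost p : ℝ)) := by
        intro σ'
        refine mul_le_mul_of_nonneg_left (untilHit_cost _ _ _) ?_
        exact mul_nonneg (hw0 k) (Finset.prod_nonneg fun s _ => hw0 _)
      refine le_trans (Finset.sum_le_sum fun σ' _ => hstep σ') ?_
      have expand : (∑ σ' : Fin r → κ, (w k * ∏ s, w (σ' s)) * (((T k).cost p : ℝ)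
              + (1 - hitI (T k) p) * ((chain g T (List.ofFn σ')).cost p : ℝ)))
          = w k * ((T k).cost p : ℝ) * (∑ σ' : Fin r → κ, ∏ s, w (σ' s))
            + w k * (1 - hitI (T k) p) * Sr := by
        rw [hSr, Finset.mul_sum, Finset.mul_sum, ← Finset.sum_add_distrib]
        exact Finset.sum_congr rfl fun σ' _ => by ring
      rw [expand, sum_prod_weights w hw1 r, mul_one]
    refine le_trans (Finset.sum_le_sum fun k _ => inner k) ?_
    rw [Finset.sum_add_distrib]
    have e1 : (∑ k, w k * ((T k).cost p : ℝ)) = c := hc.symm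
    have e2 : (∑ k, w k * (1 - hitI (T k) p) * Sr) = (1 - q) * Sr := by
      rw [← Finset.sum_mul]
      congr 1
      have : ∀ k : κ, w k * (1 - hitI (T k) p) = w k - w k * hitI (T k) p := fun k => by ring
      rw [Finset.sum_congr rfl fun k _ => this k, Finset.sum_sub_distrib, hw1, hq]
    rw [e1, e2]
    have hih : Sr ≤ E := ih
    have h2 : x * Sr ≤ x * E := mul_le_mul_of_nonneg_left hih hx0
    have h4 : x * E = c * (x * (∑ j ∈ Finset.range r, x ^ j)) + x ^ (r+1) * m := by
      rw [hE]; ring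
    have h3 : (∑ j ∈ Finset.range (r+1), x ^ j) = x * (∑ j ∈ Finset.range r, x ^ j) + 1 :=
      geom_sum_succ
    rw [h3, ← hx]
    rw [h4] at h2
    nlinarith [h2]

end Chain
section NoFinder

open Finset

variable {m : ℕ} {g : PFn (Fin m) Bool Bool}

theorem RS_le_mem {T : ℝ} (hT : 0 ≤ T) (A : RandAlg (Fin m) Sab Bool)
    (hA : A.Computes (fsab g) 0) (hE : A.ECostLe (fsab g) T) : RS g ≤ T :=
  csInf_le ⟨0, fun _ hx => hx.1⟩ ⟨hT, A, hA, hE⟩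

theorem no_finder {κ : Type} [Fintype κ] (T : κ → DTree (Fin m) Sab Unit) (w : κ → ℝ)
    (hw0 : ∀ k, 0 ≤ w k) (hw1 : ∑ k, w k = 1)
    (hD : ∃ p : Fin m → Sab, (fsab g p).isSome)
    (hgood : ∀ p : Fin m → Sab, (fsab g p).isSome →
      ∑ k, w k * ((T k).cost p : ℝ) < RS g * ∑ k, w k * hitI (T k) p) : False := by
  classical
  set c : (Fin m → Sab) → ℝ := fun p => ∑ k, w k * ((T k).cost p : ℝ) with hcDef
  set q : (Fin m → Sab) → ℝ := fun p => ∑ k, w k * hitI (T k) p with hqDef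
  have hc0 : ∀ p, 0 ≤ c p := fun p =>
    Finset.sum_nonneg fun k _ => mul_nonneg (hw0 k) (by positivity)
  have hq0 : ∀ p, 0 ≤ q p := fun p =>
    Finset.sum_nonneg fun k _ => mul_nonneg (hw0 k) (hitI_nonneg _ _)
  have hq1 : ∀ p, q p ≤ 1 := by
    intro p
    rw [hqDef, ← hw1]
    exact Finset.sum_le_sum fun k _ => by
      nlinarith [hw0 k, hitI_nonneg (T k) p, hitI_le_one (T k) p]
  have hgood' : ∀ p, (fsab g p).isSome → c p < RS g * q p := fun p hp => hgood p hp
  have hqpos : ∀ p, (fsab g p).isSome → 0 < q p := by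
    intro p hp
    have hcq := hgood' p hp
    rcases lt_or_eq_of_le (hq0 p) with h | h
    · exact h
    · exfalso; rw [← h, mul_zero] at hcq; linarith [hc0 p]
  obtain ⟨p₀, hp₀⟩ := hD
  have hRSpos : 0 < RS g := by
    have h1 := hgood' p₀ hp₀
    nlinarith [hc0 p₀, hq1 p₀, hqpos p₀ hp₀]
  -- the finite domain
  set Dfin : Finset (Fin m → Sab) := Finset.univ.filter (fun p => (fsab g p).isSome)
    with hDfin
  have hDne : Dfin.Nonempty := ⟨p₀, by simp [hDfin, hp₀]⟩
  have hmemD : ∀ p, p ∈ Dfin ↔ (fsab g p).isSome := by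
    intro p; simp [hDfin]
  -- uniform bounds
  set δ : ℝ := (Dfin.image q).min' (hDne.image q) with hδDef
  have hδ_le : ∀ p ∈ Dfin, δ ≤ q p := fun p hp =>
    Finset.min'_le _ _ (Finset.mem_image_of_mem q hp)
  have hδpos : 0 < δ := by
    obtain ⟨p, hp, hpe⟩ := Finset.mem_image.1 (Finset.min'_mem (Dfin.image q) (hDne.image q))
    rw [hδDef, ← hpe]
    exact hqpos p ((hmemD p).1 hp)
  have hδ1 : δ ≤ 1 := le_trans (hδ_le p₀ ((hmemD p₀).2 hp₀)) (hq1 p₀)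
  set γ : ℝ := (Dfin.image (fun p => RS g - c p / q p)).min' (hDne.image _) with hγDef
  have hγ_le : ∀ p ∈ Dfin, γ ≤ RS g - c p / q p := fun p hp =>
    Finset.min'_le _ _ (Finset.mem_image_of_mem _ hp)
  have hγpos : 0 < γ := by
    obtain ⟨p, hp, hpe⟩ := Finset.mem_image.1
      (Finset.min'_mem (Dfin.image (fun p => RS g - c p / q p)) (hDne.image _))
    rw [hγDef, ← hpe]
    have hps := (hmemD p).1 hp
    have h1 := hgood' p hps
    have h2 := hqpos p hps
    have h3 : c p / q p < RS g := (div_lt_iff₀ h2).2 (by nlinarith)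
    linarith
  -- choose the number of rounds
  obtain ⟨r, hr⟩ := exists_pow_lt_of_lt_one (x := γ / (m + 1)) (div_pos hγpos (by positivity))
    (show (1:ℝ) - δ < 1 by linarith)
  have hxr0 : (0:ℝ) ≤ (1 - δ) ^ r := pow_nonneg (by linarith) r
  -- the zero-error algorithm
  set A : RandAlg (Fin m) Sab Bool :=
    { Ω := Fin r → κ
      p := fun σ => ∏ s, w (σ s)
      nonneg := fun σ => Finset.prod_nonneg fun s _ => hw0 _
      sum_one := sum_prod_weights w hw1 r
      tree := fun σ => chain g T (List.ofFn σ) } with hA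
  have hcomp : A.Computes (fsab g) 0 := by
    intro p b hpb
    have : A.succProb p b = ∑ σ : Fin r → κ, ∏ s, w (σ s) := by
      refine Finset.sum_congr rfl fun σ _ => ?_
      rw [if_pos (chain_output g T (List.ofFn σ) hpb)]
    rw [this, sum_prod_weights w hw1 r]
    norm_num
  set T₀ : ℝ := RS g - γ + (1 - δ) ^ r * m with hT₀
  have hecost : A.ECostLe (fsab g) T₀ := by
    intro p hp
    have h1 : A.expCost p
        ≤ c p * (∑ j ∈ Finset.range r, (1 - q p) ^ j) + (1 - q p) ^ r * m :=
      chain_cost_exp g T w hw0 hw1 p r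
    have h2 : c p * (∑ j ∈ Finset.range r, (1 - q p) ^ j) ≤ c p * (1 / q p) :=
      mul_le_mul_of_nonneg_left (geom_aux (hqpos p hp) (hq1 p) r) (hc0 p)
    have h3 : (1 - q p) ^ r ≤ (1 - δ) ^ r :=
      pow_le_pow_left₀ (by linarith [hq1 p]) (by linarith [hδ_le p ((hmemD p).2 hp)]) r
    have h4 : c p * (1 / q p) ≤ RS g - γ := by
      have := hγ_le p ((hmemD p).2 hp)
      rw [mul_one_div]
      linarith
    have h5 : (1 - q p) ^ r * m ≤ (1 - δ) ^ r * m :=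
      mul_le_mul_of_nonneg_right h3 (Nat.cast_nonneg m)
    rw [hT₀]
    linarith
  have hT₀lt : T₀ < RS g := by
    have h1 : (1 - δ) ^ r * m ≤ γ / (m + 1) * m :=
      mul_le_mul_of_nonneg_right hr.le (by positivity)
    have h2 : γ / (m + 1) * m < γ := by
      rw [div_mul_eq_mul_div, div_lt_iff₀ (by positivity)]
      nlinarith
    rw [hT₀]; linarith
  have : RS g ≤ max T₀ 0 :=
    RS_le_mem (le_max_right _ _) A hcomp (fun p hp => le_trans (hecost p hp) (le_max_left _ _))
  rcases max_cases T₀ 0 with ⟨he, _⟩ | ⟨he, _⟩ <;> rw [he] at this <;> linarith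

end NoFinder
section Dual

open Finset

variable {m : ℕ} (g : PFn (Fin m) Bool Bool)

/-- The domain of the sabotage problem, as a type. -/
def SDom (g : PFn (Fin m) Bool Bool) : Type := {p : Fin m → Sab // (fsab g p).isSome}

noncomputable instance : Fintype (SDom g) := by
  classical
  unfold SDom; infer_instance

/-- LP duality: a hard distribution for the sabotage-finding game. -/
theorem dual_exists (hD : ∃ p : Fin m → Sab, (fsab g p).isSome) :
    ∃ μ : SDom g → ℝ, (∀ a, 0 ≤ μ a) ∧ (∑ a, μ a = 1) ∧
      ∀ t : DTree (Fin m) Sab Unit,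
        RS g * (∑ a, μ a * hitI t a.1) ≤ ∑ a, μ a * ((t.cost a.1 : ℝ)) := by
  classical
  haveI hne : Nonempty (SDom g) := by obtain ⟨p, hp⟩ := hD; exact ⟨⟨p, hp⟩⟩
  set Φ : DTree (Fin m) Sab Unit → (SDom g → ℝ) :=
    fun t a => RS g * hitI t a.1 - (t.cost a.1 : ℝ) with hΦ
  set S : Set (SDom g → ℝ) := Set.range Φ with hS
  set O : Set (SDom g → ℝ) := Set.pi Set.univ (fun _ => Set.Ioi (0:ℝ)) with hO
  have hzeroS : (0 : SDom g → ℝ) ∈ S := by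
    refine ⟨DTree.leaf (), funext fun a => ?_⟩
    simp [hΦ, hitI, hitB, DTree.cost]
  by_cases hKO : ∃ y ∈ convexHull ℝ S, y ∈ O
  · -- a good mixed finder exists: contradiction with the definition of RS
    exfalso
    obtain ⟨y, hyK, hyO⟩ := hKO
    rw [_root_.convexHull_eq] at hyK
    obtain ⟨ι, tf, wι, zι, hw0, hw1, hzS, hcm⟩ := hyK
    have hym : y = ∑ i ∈ tf, wι i • zι i := by
      rw [← hcm, Finset.centerMass_eq_of_sum_1 _ _ hw1]
    set κ := {i : ι // i ∈ tf}
    have hchoose : ∀ k : κ, ∃ t : DTree (Fin m) Sab Unit, Φ t = zι k.1 :=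
      fun k => hzS k.1 k.2
    set T : κ → DTree (Fin m) Sab Unit := fun k => (hchoose k).choose with hT
    have hTspec : ∀ k : κ, Φ (T k) = zι k.1 := fun k => (hchoose k).choose_spec
    set w' : κ → ℝ := fun k => wι k.1 with hw'
    refine no_finder T w' (fun k => hw0 k.1 k.2) ?_ hD ?_
    · rw [hw', Finset.sum_coe_sort tf wι, hw1]
    · intro p hp
      have hy : 0 < y ⟨p, hp⟩ := hyO ⟨p, hp⟩ (Set.mem_univ _)
      have hyv : y ⟨p, hp⟩ = ∑ k : κ, w' k * (RS g * hitI (T k) p - ((T k).cost p : ℝ)) := by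
        rw [hym]
        rw [← Finset.sum_coe_sort tf (fun i => wι i • zι i)]
        erw [Finset.sum_apply]
        refine Finset.sum_congr rfl fun k _ => ?_
        have := congrFun (hTspec k) ⟨p, hp⟩
        simp only [hΦ] at this
        erw [Pi.smul_apply, smul_eq_mul, ← this]
      rw [hyv] at hy
      have hexp : ∑ k : κ, w' k * (RS g * hitI (T k) p - ((T k).cost p : ℝ))
          = RS g * (∑ k : κ, w' k * hitI (T k) p) - ∑ k : κ, w' k * ((T k).cost p : ℝ) := by
        rw [Finset.mul_sum, ← Finset.sum_sub_distrib]
        exact Finset.sum_congr rfl fun k _ => by ring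
      rw [hexp] at hy
      linarith
  · -- separation gives the hard distribution
    have hOconv : Convex ℝ O := convex_pi (fun _ _ => convex_Ioi 0)
    have hOopen : IsOpen O := isOpen_set_pi Set.finite_univ (fun _ _ => isOpen_Ioi)
    have hdisj : Disjoint O (convexHull ℝ S) := by
      rw [Set.disjoint_right]
      intro y hy hyO
      exact hKO ⟨y, hy, hyO⟩
    obtain ⟨f, u, hfO, hfK⟩ := geometric_hahn_banach_open hOconv hOopen
      (convex_convexHull ℝ S) hdisj
    set one : SDom g → ℝ := fun _ => 1 with hone
    have honeO : one ∈ O := fun a _ => by norm_num [hone]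
    have hcone : ∀ y ∈ O, f y ≤ 0 := by
      intro y hy
      by_contra hpos
      push_neg at hpos
      set cf := (max u 0 + 1) / f y with hcf
      have hcfpos : 0 < cf := by positivity
      have hmem : cf • y ∈ O := by
        intro a _
        exact mul_pos hcfpos (hy a (Set.mem_univ a))
      have := hfO _ hmem
      rw [map_smul, smul_eq_mul, hcf, div_mul_cancel₀ _ (ne_of_gt hpos)] at this
      have h2 : u < max u 0 + 1 := lt_of_le_of_lt (le_max_left u 0) (by linarith)
      linarith
    have huf : ∀ ε : ℝ, 0 < ε → ε * f one < u := by
      intro ε hε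
      have hmem : ε • one ∈ O := fun a _ => by simpa [hone] using hε
      have := hfO _ hmem
      rwa [map_smul, smul_eq_mul] at this
    have hfone_lt : f one < u := by simpa using huf 1 one_pos
    have hu0 : 0 ≤ u := by
      by_contra hu
      push_neg at hu
      have hfone : f one < 0 := lt_trans hfone_lt hu
      have hε : 0 < u / (2 * f one) := div_pos_of_neg_of_neg (by linarith) (by linarith)
      have hthis := huf _ hε
      have heq : u / (2 * f one) * f one = u / 2 := by
        rw [div_mul_eq_mul_div, div_eq_iff (mul_ne_zero two_ne_zero (ne_of_lt hfone))]
        ring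
      rw [heq] at hthis
      linarith
    set e : SDom g → (SDom g → ℝ) := fun a b => if a = b then 1 else 0 with he
    have hrep : ∀ y : SDom g → ℝ, f y = ∑ a, y a * f (e a) := by
      intro y
      have hy : y = ∑ a, y a • e a := by
        funext b
        rw [Finset.sum_apply]
        simp [he, mul_ite, Finset.sum_ite_eq]
      conv_lhs => rw [hy]
      rw [map_sum]
      exact Finset.sum_congr rfl fun a _ => by rw [map_smul, smul_eq_mul]
    have hea : ∀ a, f (e a) ≤ 0 := by
      intro a
      by_contra hfa
      push_neg at hfa
      have key : ∀ ε : ℝ, 0 < ε → f (e a) + ε * f one ≤ 0 := by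
        intro ε hε
        have hmem : e a + ε • one ∈ O := by
          intro b _
          have h1 : (e a + ε • one) b = e a b + ε := by simp [hone]
          rw [Set.mem_Ioi, h1, he]
          dsimp only
          split <;> linarith
        have := hcone _ hmem
        rwa [map_add, map_smul, smul_eq_mul] at this
      have hfone0 : f one < 0 := by have := key 1 one_pos; linarith
      have hε : 0 < f (e a) / (2 * (- f one)) := div_pos hfa (by linarith)
      have hthis := key _ hε
      have heq : f (e a) / (2 * (- f one)) * f one = - (f (e a) / 2) := by
        rw [div_mul_eq_mul_div, div_eq_iff (by simp; intro h; linarith : (2 * (- f one)) ≠ 0)]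
        ring
      rw [heq] at hthis
      linarith
    have hu_le : u ≤ 0 := by
      have := hfK 0 (subset_convexHull ℝ S hzeroS)
      rwa [map_zero] at this
    set sv := ∑ a, -f (e a) with hsv
    have hfone_eq : f one = ∑ a, f (e a) := by
      rw [hrep one]
      exact Finset.sum_congr rfl fun a _ => by rw [hone]; ring_nf
    have hsv_eq : sv = - f one := by
      rw [hsv, hfone_eq, ← Finset.sum_neg_distrib]
    have hsvpos : 0 < sv := by
      rw [hsv_eq]
      have : f one < 0 := lt_of_lt_of_le hfone_lt hu_le
      linarith
    refine ⟨fun a => -f (e a) / sv, fun a => div_nonneg (neg_nonneg.2 (hea a)) hsvpos.le, ?_, ?_⟩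
    · rw [← Finset.sum_div, ← hsv, div_self (ne_of_gt hsvpos)]
    · intro t
      have hΦK : u ≤ f (Φ t) := hfK _ (subset_convexHull ℝ S ⟨t, rfl⟩)
      have hfΦ : f (Φ t) = ∑ a, Φ t a * f (e a) := hrep _
      have key : ∑ a, (-f (e a) / sv) * Φ t a ≤ 0 := by
        have hstep : ∑ a, (-f (e a) / sv) * Φ t a = - f (Φ t) / sv := by
          rw [hfΦ, ← Finset.sum_neg_distrib, Finset.sum_div]
          exact Finset.sum_congr rfl fun a _ => by ring
        rw [hstep]
        have h0 : 0 ≤ f (Φ t) := le_trans hu0 hΦK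
        exact div_nonpos_of_nonpos_of_nonneg (by linarith) hsvpos.le
      have hexp2 : ∑ a, (-f (e a) / sv) * Φ t a
          = RS g * (∑ a, (-f (e a) / sv) * hitI t a.1)
            - ∑ a, (-f (e a) / sv) * ((t.cost a.1 : ℝ)) := by
        rw [Finset.mul_sum, ← Finset.sum_sub_distrib]
        refine Finset.sum_congr rfl fun a _ => ?_
        rw [hΦ]
        ring
      rw [hexp2] at key
      linarith

end Dual
section Sim

open Finset

variable {n m : ℕ}

/-- Simulation of a tree for `f ∘ g`, answering queries into copy `i` using the
sabotaged string `a i`; when a sabotaged entry is reached, query `i` (a bit of the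
outer input) and switch copy `i` to a consistent input of `g` with that value. -/
noncomputable def sim (g : PFn (Fin m) Bool Bool) (q : Fin n → Fin m → Sab) :
    DTree (Fin n × Fin m) Bool Bool → (Fin n → Fin m → Sab) → DTree (Fin n) Bool Bool
  | .leaf b, _ => .leaf b
  | .node ij nx, a =>
    match a ij.1 ij.2 with
    | Sab.zero => sim g q (nx false) a
    | Sab.one => sim g q (nx true) a
    | Sab.star => .node ij.1 fun zb => sim g q (nx (pick g (q ij.1) zb ij.2))
        (Function.update a ij.1 (fun j => Sab.ofBool (pick g (q ij.1) zb j)))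
    | Sab.dagger => .node ij.1 fun zb => sim g q (nx (pick g (q ij.1) zb ij.2))
        (Function.update a ij.1 (fun j => Sab.ofBool (pick g (q ij.1) zb j)))

/-- The decision tree induced on copy `i` (stopped at the first sabotaged entry). -/
noncomputable def induce (X : Fin n × Fin m → Bool) (i : Fin n) :
    DTree (Fin n × Fin m) Bool Bool → DTree (Fin m) Sab Unit
  | .leaf _ => .leaf ()
  | .node ij nx =>
    if ij.1 = i then
      .node ij.2 fun s =>
        match s with
        | Sab.zero => induce X i (nx false)
        | Sab.one => induce X i (nx true)
        | Sab.star => .leaf ()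
        | Sab.dagger => .leaf ()
    else induce X i (nx (X ij))

/-- **(C1)** The per-copy induced trees account for at most the total cost. -/
theorem induce_cost_sum (X : Fin n × Fin m → Bool) (q : Fin n → Fin m → Sab)
    (hq : ∀ i j c, q i j = Sab.ofBool c → X (i, j) = c) :
    ∀ t : DTree (Fin n × Fin m) Bool Bool,
      ∑ i, (induce X i t).cost (q i) ≤ t.cost X := by
  intro t
  induction t with
  | leaf b => simp [induce, DTree.cost]
  | node ij nx ih =>
    have hsplit : ∀ G : Fin n → ℕ, ∑ i, G i = G ij.1 + ∑ i ∈ univ.erase ij.1, G i :=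
      fun G => (Finset.add_sum_erase univ G (mem_univ ij.1)).symm
    have hoff : ∀ i, i ≠ ij.1 →
        induce X i (.node ij nx) = induce X i (nx (X ij)) := by
      intro i hi
      rw [induce, if_neg (fun hh => hi hh.symm)]
    have hcost : (DTree.node ij nx).cost X = (nx (X ij)).cost X + 1 := rfl
    rw [hcost, hsplit]
    have herase : ∑ i ∈ univ.erase ij.1, (induce X i (.node ij nx)).cost (q i)
        = ∑ i ∈ univ.erase ij.1, (induce X i (nx (X ij))).cost (q i) :=
      Finset.sum_congr rfl fun i hi => by rw [hoff i (Finset.mem_erase.1 hi).1]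
    rw [herase]
    have hown : induce X ij.1 (.node ij nx)
        = .node ij.2 (fun s =>
            match s with
            | Sab.zero => induce X ij.1 (nx false)
            | Sab.one => induce X ij.1 (nx true)
            | Sab.star => .leaf ()
            | Sab.dagger => .leaf ()) := by
      rw [induce, if_pos rfl]
    rw [hown]
    have hcost2 : (DTree.node ij.2 (fun s =>
            match s with
            | Sab.zero => induce X ij.1 (nx false)
            | Sab.one => induce X ij.1 (nx true)
            | Sab.star => (.leaf () : DTree (Fin m) Sab Unit)
            | Sab.dagger => .leaf ())).cost (q ij.1)
        = (match q ij.1 ij.2 with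
            | Sab.zero => induce X ij.1 (nx false)
            | Sab.one => induce X ij.1 (nx true)
            | Sab.star => (.leaf () : DTree (Fin m) Sab Unit)
            | Sab.dagger => .leaf ()).cost (q ij.1) + 1 := rfl
    rw [hcost2]
    cases hc : q ij.1 ij.2 with
    | zero =>
      have hX : X ij = false := by
        have := hq ij.1 ij.2 false (by rw [hc]; rfl)
        rwa [Prod.mk.eta] at this
      have : (induce X ij.1 (nx false)).cost (q ij.1) + 1
            + ∑ i ∈ univ.erase ij.1, (induce X i (nx (X ij))).cost (q i)
          = (∑ i, (induce X i (nx (X ij))).cost (q i)) + 1 := by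
        rw [hsplit (fun i => (induce X i (nx (X ij))).cost (q i)), hX]
        omega
      rw [this]
      have := ih (X ij)
      omega
    | one =>
      have hX : X ij = true := by
        have := hq ij.1 ij.2 true (by rw [hc]; rfl)
        rwa [Prod.mk.eta] at this
      have : (induce X ij.1 (nx true)).cost (q ij.1) + 1
            + ∑ i ∈ univ.erase ij.1, (induce X i (nx (X ij))).cost (q i)
          = (∑ i, (induce X i (nx (X ij))).cost (q i)) + 1 := by
        rw [hsplit (fun i => (induce X i (nx (X ij))).cost (q i)), hX]
        omega
      rw [this]
      have := ih (X ij)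
      omega
    | star =>
      have h1 : ((DTree.leaf () : DTree (Fin m) Sab Unit)).cost (q ij.1) = 0 := rfl
      rw [h1]
      have h2 : ∑ i ∈ univ.erase ij.1, (induce X i (nx (X ij))).cost (q i)
          ≤ ∑ i, (induce X i (nx (X ij))).cost (q i) :=
        Finset.sum_le_sum_of_subset (Finset.subset_univ _)
      have := ih (X ij)
      omega
    | dagger =>
      have h1 : ((DTree.leaf () : DTree (Fin m) Sab Unit)).cost (q ij.1) = 0 := rfl
      rw [h1]
      have h2 : ∑ i ∈ univ.erase ij.1, (induce X i (nx (X ij))).cost (q i)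
          ≤ ∑ i, (induce X i (nx (X ij))).cost (q i) :=
        Finset.sum_le_sum_of_subset (Finset.subset_univ _)
      have := ih (X ij)
      omega

/-- The induced tree only depends on the answers to the other copies. -/
theorem induce_congr (X X' : Fin n × Fin m → Bool) (i : Fin n)
    (hXX : ∀ ij : Fin n × Fin m, ij.1 ≠ i → X ij = X' ij) :
    ∀ t : DTree (Fin n × Fin m) Bool Bool, induce X i t = induce X' i t := by
  intro t
  induction t with
  | leaf _ => rfl
  | node ij nx ih =>
    by_cases hij : ij.1 = i
    · rw [induce, induce, if_pos hij, if_pos hij]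
      congr 1
      funext s
      cases s <;> simp [ih]
    · rw [induce, induce, if_neg hij, if_neg hij, hXX ij hij]
      exact ih _

end Sim
section Sim2

open Finset

variable {n m : ℕ}

/-- The composed input determined by `z` and the sabotaged strings `q`. -/
noncomputable def Xof (g : PFn (Fin m) Bool Bool) (z : Fin n → Bool)
    (q : Fin n → Fin m → Sab) : Fin n × Fin m → Bool :=
  fun ij => pick g (q ij.1) (z ij.1) ij.2

/-- The state of the simulation corresponding to hit-flags `h`. -/
noncomputable def aOf (g : PFn (Fin m) Bool Bool) (z : Fin n → Bool)
    (q : Fin n → Fin m → Sab) (h : Fin n → Bool) : Fin n → Fin m → Sab :=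
  fun i => if h i then (fun j => Sab.ofBool (pick g (q i) (z i) j)) else q i

theorem aOf_bit {g : PFn (Fin m) Bool Bool} {z : Fin n → Bool} {q : Fin n → Fin m → Sab}
    (hq : ∀ i, (fsab g (q i)).isSome) (h : Fin n → Bool) {i : Fin n} {j : Fin m} {c : Bool}
    (hc : aOf g z q h i j = Sab.ofBool c) : Xof g z q (i, j) = c := by
  rw [aOf] at hc
  by_cases hh : h i = true
  · rw [if_pos hh] at hc
    exact Sab.ofBool_inj hc
  · rw [if_neg hh] at hc
    exact pick_bit (hq i) (z i) hc

theorem aOf_q {g : PFn (Fin m) Bool Bool} {z : Fin n → Bool} {q : Fin n → Fin m → Sab}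
    {h : Fin n → Bool} {i : Fin n} (hh : ¬ h i = true) : aOf g z q h i = q i := by
  rw [aOf, if_neg hh]

theorem aOf_not_sab {g : PFn (Fin m) Bool Bool} {z : Fin n → Bool} {q : Fin n → Fin m → Sab}
    {h : Fin n → Bool} {i : Fin n} {j : Fin m} (hh : h i = true) :
    aOf g z q h i j ≠ Sab.star ∧ aOf g z q h i j ≠ Sab.dagger := by
  rw [aOf, if_pos hh]
  exact ⟨Sab.ofBool_ne_star _, Sab.ofBool_ne_dagger _⟩

theorem aOf_update (g : PFn (Fin m) Bool Bool) (z : Fin n → Bool) (q : Fin n → Fin m → Sab)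
    (h : Fin n → Bool) (i : Fin n) :
    Function.update (aOf g z q h) i (fun j => Sab.ofBool (pick g (q i) (z i) j))
      = aOf g z q (Function.update h i true) := by
  funext i'
  rw [Function.update_apply]
  by_cases hii : i' = i
  · subst hii
    rw [if_pos rfl, aOf, Function.update_apply, if_pos rfl, if_pos rfl]
  · rw [if_neg hii, aOf, aOf, Function.update_apply, if_neg hii]

theorem sim_node_eq (g : PFn (Fin m) Bool Bool) (q a : Fin n → Fin m → Sab)
    (ij : Fin n × Fin m) (nx : Bool → DTree (Fin n × Fin m) Bool Bool) :
    sim g q (.node ij nx) a =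
      (match a ij.1 ij.2 with
       | Sab.zero => sim g q (nx false) a
       | Sab.one => sim g q (nx true) a
       | Sab.star => .node ij.1 fun zb => sim g q (nx (pick g (q ij.1) zb ij.2))
           (Function.update a ij.1 (fun j => Sab.ofBool (pick g (q ij.1) zb j)))
       | Sab.dagger => .node ij.1 fun zb => sim g q (nx (pick g (q ij.1) zb ij.2))
           (Function.update a ij.1 (fun j => Sab.ofBool (pick g (q ij.1) zb j)))) := by
  simp only [sim]

theorem sim_eq_bool {g : PFn (Fin m) Bool Bool} {q a : Fin n → Fin m → Sab}
    {ij : Fin n × Fin m} {nx : Bool → DTree (Fin n × Fin m) Bool Bool} {c : Bool}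
    (hc : a ij.1 ij.2 = Sab.ofBool c) :
    sim g q (.node ij nx) a = sim g q (nx c) a := by
  rw [sim_node_eq, hc]
  cases c <;> rfl

theorem sim_eq_sab {g : PFn (Fin m) Bool Bool} {q a : Fin n → Fin m → Sab}
    {ij : Fin n × Fin m} {nx : Bool → DTree (Fin n × Fin m) Bool Bool}
    (hc : a ij.1 ij.2 = Sab.star ∨ a ij.1 ij.2 = Sab.dagger) :
    sim g q (.node ij nx) a = .node ij.1 (fun zb => sim g q (nx (pick g (q ij.1) zb ij.2))
      (Function.update a ij.1 (fun j => Sab.ofBool (pick g (q ij.1) zb j)))) := by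
  rcases hc with hc | hc <;> rw [sim_node_eq, hc]

/-- **(C3)** The simulation outputs what the original tree outputs on `Xof`. -/
theorem sim_output {g : PFn (Fin m) Bool Bool} {z : Fin n → Bool} {q : Fin n → Fin m → Sab}
    (hq : ∀ i, (fsab g (q i)).isSome) :
    ∀ (t : DTree (Fin n × Fin m) Bool Bool) (h : Fin n → Bool),
      (sim g q t (aOf g z q h)).output z = t.output (Xof g z q) := by
  intro t
  induction t with
  | leaf b => intro h; rfl
  | node ij nx ih =>
    intro h
    have hout : (DTree.node ij nx).output (Xof g z q)
        = (nx (Xof g z q ij)).output (Xof g z q) := rfl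
    cases hc : aOf g z q h ij.1 ij.2 with
    | zero =>
      have hX : Xof g z q ij = false := by
        have := aOf_bit hq h (c := false) (by rw [hc]; rfl)
        rwa [Prod.mk.eta] at this
      rw [sim_eq_bool (c := false) (hc.trans rfl), hout, hX]
      exact ih false h
    | one =>
      have hX : Xof g z q ij = true := by
        have := aOf_bit hq h (c := true) (by rw [hc]; rfl)
        rwa [Prod.mk.eta] at this
      rw [sim_eq_bool (c := true) (hc.trans rfl), hout, hX]
      exact ih true h
    | star =>
      rw [sim_eq_sab (Or.inl hc)]
      show (sim g q (nx (pick g (q ij.1) (z ij.1) ij.2))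
        (Function.update (aOf g z q h) ij.1
          (fun j => Sab.ofBool (pick g (q ij.1) (z ij.1) j)))).output z = _
      rw [aOf_update, hout]
      exact ih (Xof g z q ij) (Function.update h ij.1 true)
    | dagger =>
      rw [sim_eq_sab (Or.inr hc)]
      show (sim g q (nx (pick g (q ij.1) (z ij.1) ij.2))
        (Function.update (aOf g z q h) ij.1
          (fun j => Sab.ofBool (pick g (q ij.1) (z ij.1) j)))).output z = _
      rw [aOf_update, hout]
      exact ih (Xof g z q ij) (Function.update h ij.1 true)

/-- **(C4)** The simulation's cost is at most the number of copies in which the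
induced tree finds a sabotaged entry. -/
theorem sim_cost {g : PFn (Fin m) Bool Bool} {z : Fin n → Bool} {q : Fin n → Fin m → Sab}
    (hq : ∀ i, (fsab g (q i)).isSome) :
    ∀ (t : DTree (Fin n × Fin m) Bool Bool) (h : Fin n → Bool),
      (sim g q t (aOf g z q h)).cost z
        ≤ ∑ i, (if h i then 0 else (if hitB (induce (Xof g z q) i t) (q i) then 1 else 0)) := by
  intro t
  induction t with
  | leaf b => intro h; exact Nat.zero_le _
  | node ij nx ih =>
    intro h
    have hoff : ∀ i, i ≠ ij.1 →
        induce (Xof g z q) i (.node ij nx) = induce (Xof g z q) i (nx (Xof g z q ij)) := by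
      intro i hi
      rw [induce, if_neg (fun hh => hi hh.symm)]
    have hown : induce (Xof g z q) ij.1 (.node ij nx)
        = .node ij.2 (fun s =>
            match s with
            | Sab.zero => induce (Xof g z q) ij.1 (nx false)
            | Sab.one => induce (Xof g z q) ij.1 (nx true)
            | Sab.star => .leaf ()
            | Sab.dagger => .leaf ()) := by
      rw [induce, if_pos rfl]
    have hsplit : ∀ G : Fin n → ℕ, ∑ i, G i = G ij.1 + ∑ i ∈ univ.erase ij.1, G i :=
      fun G => (Finset.add_sum_erase univ G (mem_univ ij.1)).symm
    set X := Xof g z q with hXdef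
    have hhit_own : hitB (induce X ij.1 (.node ij nx)) (q ij.1)
        = (sabB (q ij.1 ij.2) || hitB ((match q ij.1 ij.2 with
            | Sab.zero => induce X ij.1 (nx false)
            | Sab.one => induce X ij.1 (nx true)
            | Sab.star => (.leaf () : DTree (Fin m) Sab Unit)
            | Sab.dagger => .leaf ()) : DTree (Fin m) Sab Unit) (q ij.1)) := by
      rw [hown]; rfl
    cases hc : aOf g z q h ij.1 ij.2 with
    | zero =>
      have hX : X ij = false := by
        have := aOf_bit hq h (c := false) (by rw [hc]; rfl)
        rwa [Prod.mk.eta] at this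
      rw [sim_eq_bool (c := false) (hc.trans rfl)]
      refine le_trans (ih false h) (le_of_eq (Finset.sum_congr rfl fun i _ => ?_))
      by_cases hh : h i = true
      · rw [if_pos hh, if_pos hh]
      · rw [if_neg hh, if_neg hh]
        congr 1
        by_cases hii : i = ij.1
        · subst hii
          rw [hhit_own]
          have hqb : q ij.1 ij.2 = Sab.ofBool false := by
            have haq := aOf_q (g := g) (z := z) (q := q) (h := h) (i := ij.1) hh
            rw [← haq, hc]; rfl
          rw [hqb]
          rfl
        · rw [hoff i hii, hX]
    | one =>
      have hX : X ij = true := by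
        have := aOf_bit hq h (c := true) (by rw [hc]; rfl)
        rwa [Prod.mk.eta] at this
      rw [sim_eq_bool (c := true) (hc.trans rfl)]
      refine le_trans (ih true h) (le_of_eq (Finset.sum_congr rfl fun i _ => ?_))
      by_cases hh : h i = true
      · rw [if_pos hh, if_pos hh]
      · rw [if_neg hh, if_neg hh]
        congr 1
        by_cases hii : i = ij.1
        · subst hii
          rw [hhit_own]
          have hqb : q ij.1 ij.2 = Sab.ofBool true := by
            have haq := aOf_q (g := g) (z := z) (q := q) (h := h) (i := ij.1) hh
            rw [← haq, hc]; rfl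
          rw [hqb]
          rfl
        · rw [hoff i hii, hX]
    | star =>
      have hhF : ¬ h ij.1 = true := fun hh => (aOf_not_sab (g := g) (z := z) (q := q) hh).1 hc
      have hqs : q ij.1 ij.2 = Sab.star := by
        have haq := aOf_q (g := g) (z := z) (q := q) (h := h) (i := ij.1) hhF
        rw [← haq, hc]
      rw [sim_eq_sab (Or.inl hc)]
      have hcost : (DTree.node ij.1 (fun zb => sim g q (nx (pick g (q ij.1) zb ij.2))
          (Function.update (aOf g z q h) ij.1
            (fun j => Sab.ofBool (pick g (q ij.1) zb j))))).cost z
          = (sim g q (nx (pick g (q ij.1) (z ij.1) ij.2))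
              (Function.update (aOf g z q h) ij.1
                (fun j => Sab.ofBool (pick g (q ij.1) (z ij.1) j)))).cost z + 1 := rfl
      rw [hcost]
      have hstep : (sim g q (nx (pick g (q ij.1) (z ij.1) ij.2))
            (Function.update (aOf g z q h) ij.1
              (fun j => Sab.ofBool (pick g (q ij.1) (z ij.1) j)))).cost z
          = (sim g q (nx (X ij)) (aOf g z q (Function.update h ij.1 true))).cost z := by
        rw [aOf_update]
        rfl
      rw [hstep]
      have hih := ih (X ij) (Function.update h ij.1 true)
      rw [hsplit (fun i => if h i then 0 else
        (if hitB (induce X i (.node ij nx)) (q i) then 1 else 0))]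
      rw [hsplit (fun i => if Function.update h ij.1 true i then 0 else
        (if hitB (induce X i (nx (X ij))) (q i) then 1 else 0))] at hih
      rw [Function.update_self] at hih
      rw [if_pos rfl] at hih
      have hone : (if h ij.1 then 0 else
          (if hitB (induce X ij.1 (.node ij nx)) (q ij.1) then 1 else 0)) = 1 := by
        rw [if_neg hhF, hhit_own, hqs]
        rfl
      have herase : ∑ i ∈ univ.erase ij.1, (if Function.update h ij.1 true i then 0 else
            (if hitB (induce X i (nx (X ij))) (q i) then 1 else 0))
          = ∑ i ∈ univ.erase ij.1, (if h i then 0 else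
            (if hitB (induce X i (.node ij nx)) (q i) then 1 else 0)) := by
        refine Finset.sum_congr rfl fun i hi => ?_
        have hii := (Finset.mem_erase.1 hi).1
        rw [Function.update_of_ne hii, hoff i hii]
      rw [herase] at hih
      rw [hone]
      omega
    | dagger =>
      have hhF : ¬ h ij.1 = true := fun hh => (aOf_not_sab (g := g) (z := z) (q := q) hh).2 hc
      have hqs : q ij.1 ij.2 = Sab.dagger := by
        have haq := aOf_q (g := g) (z := z) (q := q) (h := h) (i := ij.1) hhF
        rw [← haq, hc]
      rw [sim_eq_sab (Or.inr hc)]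
      have hcost : (DTree.node ij.1 (fun zb => sim g q (nx (pick g (q ij.1) zb ij.2))
          (Function.update (aOf g z q h) ij.1
            (fun j => Sab.ofBool (pick g (q ij.1) zb j))))).cost z
          = (sim g q (nx (pick g (q ij.1) (z ij.1) ij.2))
              (Function.update (aOf g z q h) ij.1
                (fun j => Sab.ofBool (pick g (q ij.1) (z ij.1) j)))).cost z + 1 := rfl
      rw [hcost]
      have hstep : (sim g q (nx (pick g (q ij.1) (z ij.1) ij.2))
            (Function.update (aOf g z q h) ij.1
              (fun j => Sab.ofBool (pick g (q ij.1) (z ij.1) j)))).cost z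
          = (sim g q (nx (X ij)) (aOf g z q (Function.update h ij.1 true))).cost z := by
        rw [aOf_update]
        rfl
      rw [hstep]
      have hih := ih (X ij) (Function.update h ij.1 true)
      rw [hsplit (fun i => if h i then 0 else
        (if hitB (induce X i (.node ij nx)) (q i) then 1 else 0))]
      rw [hsplit (fun i => if Function.update h ij.1 true i then 0 else
        (if hitB (induce X i (nx (X ij))) (q i) then 1 else 0))] at hih
      rw [Function.update_self] at hih
      rw [if_pos rfl] at hih
      have hone : (if h ij.1 then 0 else
          (if hitB (induce X ij.1 (.node ij nx)) (q ij.1) then 1 else 0)) = 1 := by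
        rw [if_neg hhF, hhit_own, hqs]
        rfl
      have herase : ∑ i ∈ univ.erase ij.1, (if Function.update h ij.1 true i then 0 else
            (if hitB (induce X i (nx (X ij))) (q i) then 1 else 0))
          = ∑ i ∈ univ.erase ij.1, (if h i then 0 else
            (if hitB (induce X i (.node ij nx)) (q i) then 1 else 0)) := by
        refine Finset.sum_congr rfl fun i hi => ?_
        have hii := (Finset.mem_erase.1 hi).1
        rw [Function.update_of_ne hii, hoff i hii]
      rw [herase] at hih
      rw [hone]
      omega

end Sim2
section Assemble

open Finset

variable {n m : ℕ}

theorem Xof_pcomp {f : PFn (Fin n) Bool Bool} {g : PFn (Fin m) Bool Bool}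
    {z : Fin n → Bool} {q : Fin n → Fin m → Sab}
    (hq : ∀ i, (fsab g (q i)).isSome) :
    pcomp f g (Xof g z q) = f z := by
  have hg : ∀ i, g (fun j => Xof g z q (i, j)) = some (z i) :=
    fun i => (pick_spec (hq i) (z i)).1
  have hsome : ∀ i, (g fun j => Xof g z q (i, j)).isSome := fun i => by rw [hg i]; rfl
  rw [pcomp, dif_pos hsome]
  congr 1
  funext i
  have h3 := Option.some_get (hsome i)
  exact Option.some_inj.1 (h3.trans (hg i))

theorem split_dual {g : PFn (Fin m) Bool Bool} (μ : SDom g → ℝ)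
    (hμ0 : ∀ a, 0 ≤ μ a) (hdual : ∀ t : DTree (Fin m) Sab Unit,
      RS g * (∑ a, μ a * hitI t a.1) ≤ ∑ a, μ a * ((t.cost a.1 : ℝ)))
    (z : Fin n → Bool) (i₀ : Fin n) (t : DTree (Fin n × Fin m) Bool Bool) :
    RS g * (∑ q : Fin n → SDom g,
        (∏ i, μ (q i)) * hitI (induce (Xof g z (fun i => (q i).1)) i₀ t) ((q i₀).1))
      ≤ ∑ q : Fin n → SDom g,
        (∏ i, μ (q i)) * (((induce (Xof g z (fun i => (q i).1)) i₀ t).cost ((q i₀).1) : ℝ)) := by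
  classical
  -- the reduced answer function, independent of copy `i₀`
  set J : ({j : Fin n // j ≠ i₀} → SDom g) → DTree (Fin m) Sab Unit := fun r =>
    induce (fun ij => if h : ij.1 = i₀ then false else pick g (r ⟨ij.1, h⟩).1 (z ij.1) ij.2)
      i₀ t with hJ
  set e := Equiv.piSplitAt i₀ (fun _ : Fin n => SDom g) with he
  have hsymm_at : ∀ (a : SDom g) (r : {j : Fin n // j ≠ i₀} → SDom g),
      e.symm (a, r) i₀ = a := by
    intro a r
    simp [he, Equiv.piSplitAt]
  have hsymm_ne : ∀ (a : SDom g) (r : {j : Fin n // j ≠ i₀} → SDom g) (j : Fin n)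
      (hj : j ≠ i₀), e.symm (a, r) j = r ⟨j, hj⟩ := by
    intro a r j hj
    simp [he, Equiv.piSplitAt, dif_neg hj]
  have hJeq : ∀ (a : SDom g) (r : {j : Fin n // j ≠ i₀} → SDom g),
      induce (Xof g z (fun i => (e.symm (a, r) i).1)) i₀ t = J r := by
    intro a r
    refine induce_congr _ _ _ (fun ij hij => ?_) t
    rw [Xof]
    rw [hsymm_ne a r ij.1 hij]
    rw [dif_neg hij]
  have hprod : ∀ (a : SDom g) (r : {j : Fin n // j ≠ i₀} → SDom g),
      (∏ i, μ (e.symm (a, r) i)) = μ a * ∏ j : {j : Fin n // j ≠ i₀}, μ (r j) := by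
    intro a r
    rw [← Finset.mul_prod_erase univ (fun i => μ (e.symm (a, r) i)) (mem_univ i₀),
      hsymm_at]
    congr 1
    rw [Finset.prod_subtype (univ.erase i₀)
      (fun j => by simp [Finset.mem_erase] : ∀ j : Fin n, j ∈ univ.erase i₀ ↔ j ≠ i₀)
      (fun j => μ (e.symm (a, r) j))]
    exact Finset.prod_congr rfl fun j _ => by rw [hsymm_ne a r j.1 j.2]
  have hPnn : ∀ r : {j : Fin n // j ≠ i₀} → SDom g,
      0 ≤ ∏ j : {j : Fin n // j ≠ i₀}, μ (r j) :=
    fun r => Finset.prod_nonneg fun j _ => hμ0 _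
  -- rewrite both sums through the splitting equivalence
  have hL : (∑ q : Fin n → SDom g,
        (∏ i, μ (q i)) * hitI (induce (Xof g z (fun i => (q i).1)) i₀ t) ((q i₀).1))
      = ∑ r : {j : Fin n // j ≠ i₀} → SDom g, (∏ j, μ (r j)) *
          (∑ a, μ a * hitI (J r) a.1) := by
    rw [← Equiv.sum_comp e.symm (fun q : Fin n → SDom g =>
      (∏ i, μ (q i)) * hitI (induce (Xof g z (fun i => (q i).1)) i₀ t) ((q i₀).1)),
      Fintype.sum_prod_type, Finset.sum_comm]
    refine Finset.sum_congr rfl fun r _ => ?_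
    rw [Finset.mul_sum]
    refine Finset.sum_congr rfl fun a _ => ?_
    rw [hprod a r, hJeq a r, hsymm_at a r]
    ring
  have hR : (∑ q : Fin n → SDom g,
        (∏ i, μ (q i)) * (((induce (Xof g z (fun i => (q i).1)) i₀ t).cost ((q i₀).1) : ℝ)))
      = ∑ r : {j : Fin n // j ≠ i₀} → SDom g, (∏ j, μ (r j)) *
          (∑ a, μ a * (((J r).cost a.1 : ℝ))) := by
    rw [← Equiv.sum_comp e.symm (fun q : Fin n → SDom g =>
      (∏ i, μ (q i)) * (((induce (Xof g z (fun i => (q i).1)) i₀ t).cost ((q i₀).1) : ℝ))),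
      Fintype.sum_prod_type, Finset.sum_comm]
    refine Finset.sum_congr rfl fun r _ => ?_
    rw [Finset.mul_sum]
    refine Finset.sum_congr rfl fun a _ => ?_
    rw [hprod a r, hJeq a r, hsymm_at a r]
    ring
  rw [hL, hR, Finset.mul_sum]
  refine Finset.sum_le_sum fun r _ => ?_
  rw [mul_left_comm]
  exact mul_le_mul_of_nonneg_left (hdual (J r)) (hPnn r)

end Assemble
theorem ite_inst {α : Sort _} {c : Prop} (i1 i2 : Decidable c) (a b : α) :
    @ite _ c i1 a b = @ite _ c i2 a b := by rw [Subsingleton.elim i1 i2]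

theorem aOf_false {n m : ℕ} (g : PFn (Fin m) Bool Bool) (z : Fin n → Bool)
    (q : Fin n → Fin m → Sab) : aOf g z q (fun _ => false) = q :=
  funext fun i => by rw [aOf]; simp
/-- **Composition of expected randomized query complexity with sabotage complexity:**
for all partial Boolean functions `f`, `g` and every `ε ∈ [0, 1/2)`,
`R̄_ε(f ∘ g) ≥ R̄_ε(f) · RS(g)`. -/
theorem Rbar_composition {n m : ℕ} (f : PFn (Fin n) Bool Bool)
    (g : PFn (Fin m) Bool Bool) (ε : ℝ) (hε0 : 0 ≤ ε) (hε : ε < 1/2) :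
    Rbar ε f * RS g ≤ Rbar ε (pcomp f g) := by
  classical
  rcases le_or_gt (RS g) 0 with hRS | hRS
  · have h1 : RS g = 0 := le_antisymm hRS (RS_nonneg g)
    rw [h1, mul_zero]
    exact Rbar_nonneg ε (pcomp f g)
  have hD : ∃ p : Fin m → Sab, (fsab g p).isSome := by
    by_contra hne
    push_neg at hne
    have h0 : RS g ≤ 0 := by
      refine RS_le_mem le_rfl (RandAlg.ofTree (DTree.leaf false)) ?_ ?_
      · intro p b hpb
        have hps : (fsab g p).isSome := by rw [hpb]; rfl
        exact absurd hps (by simpa using hne p)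
      · intro p hp
        exact absurd hp (by simpa using hne p)
    linarith
  obtain ⟨μ, hμ0, hμ1, hdual⟩ := dual_exists g hD
  rw [show Rbar ε (pcomp f g) = sInf {T : ℝ | 0 ≤ T ∧
    ∃ A : RandAlg (Fin n × Fin m) Bool Bool,
      A.Computes (pcomp f g) ε ∧ A.ECostLe (pcomp f g) T} from rfl]
  refine le_csInf ⟨_, Rbar_set_nonempty (pcomp f g) ε hε0⟩ ?_
  rintro T ⟨hT0, A, hAc, hAe⟩
  letI := A.fin
  set qS : (Fin n → SDom g) → (Fin n → Fin m → Sab) := fun w i => (w i).1 with hqS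
  have hqsome : ∀ w : Fin n → SDom g, ∀ i, (fsab g (qS w i)).isSome := fun w i => (w i).2
  have hsum1 : ∑ q : Fin n → SDom g, ∏ i, μ (q i) = 1 := by
    rw [← Fintype.sum_pow μ n, hμ1, one_pow]
  have hprodnn : ∀ q : Fin n → SDom g, 0 ≤ ∏ i, μ (q i) :=
    fun q => Finset.prod_nonneg fun i _ => hμ0 _
  set B : RandAlg (Fin n) Bool Bool :=
    { Ω := A.Ω × (Fin n → SDom g)
      fin := inferInstance
      p := fun w => A.p w.1 * ∏ i, μ (w.2 i)
      nonneg := fun w => mul_nonneg (A.nonneg w.1) (hprodnn w.2)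
      sum_one := by
        rw [Fintype.sum_prod_type]
        calc ∑ ω, ∑ q : Fin n → SDom g, A.p ω * ∏ i, μ (q i)
            = ∑ ω, A.p ω * ∑ q : Fin n → SDom g, ∏ i, μ (q i) :=
              Finset.sum_congr rfl fun ω _ => (Finset.mul_sum _ _ _).symm
          _ = 1 := by
              rw [hsum1]
              simp only [mul_one]
              exact A.sum_one
      tree := fun w => sim g (qS w.2) (A.tree w.1) (qS w.2) } with hB
  have hout : ∀ (z : Fin n → Bool) (ω : A.Ω) (w : Fin n → SDom g),
      (sim g (qS w) (A.tree ω) (qS w)).output z = (A.tree ω).output (Xof g z (qS w)) := by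
    intro z ω w
    have h1 := sim_output (z := z) (hqsome w) (A.tree ω) (fun _ => false)
    rwa [aOf_false g z (qS w)] at h1
  -- B is an ε-error algorithm for f
  have hBc : B.Computes f ε := by
    intro z b hzb
    have hsucc : B.succProb z b
        = ∑ q : Fin n → SDom g, (∏ i, μ (q i)) * A.succProb (Xof g z (qS q)) b := by
      simp only [RandAlg.succProb]
      rw [Fintype.sum_prod_type, Finset.sum_comm]
      refine Finset.sum_congr rfl fun q _ => ?_
      rw [Finset.mul_sum]
      refine Finset.sum_congr rfl fun ω _ => ?_
      have hBt : (B.tree (ω, q)).output z = (A.tree ω).output (Xof g z (qS q)) :=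
        hout z ω q
      by_cases hco : (A.tree ω).output (Xof g z (qS q)) = b
      · rw [if_pos (hBt.trans hco), if_pos hco]
        show A.p ω * ∏ i, μ (q i) = _
        ring
      · rw [if_neg (fun hcc => hco (hBt.symm.trans hcc)), if_neg hco, mul_zero]
    rw [hsucc]
    calc 1 - ε = ∑ q : Fin n → SDom g, (∏ i, μ (q i)) * (1 - ε) := by
          rw [← Finset.sum_mul, hsum1, one_mul]
      _ ≤ _ := by
          refine Finset.sum_le_sum fun q _ => ?_
          refine mul_le_mul_of_nonneg_left ?_ (hprodnn q)
          refine hAc _ b ?_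
          rw [Xof_pcomp (hqsome q), hzb]
  -- B has small expected cost
  have hBe : B.ECostLe f (T / RS g) := by
    intro z hz
    have hpc : ∀ q : Fin n → SDom g, pcomp f g (Xof g z (qS q)) = f z :=
      fun q => Xof_pcomp (hqsome q)
    have hexp : B.expCost z = ∑ ω, ∑ q : Fin n → SDom g,
        (A.p ω * ∏ i, μ (q i)) * ((B.tree (ω, q)).cost z : ℝ) := by
      simp only [RandAlg.expCost]
      rw [Fintype.sum_prod_type]
    have hcostb : ∀ (ω : A.Ω) (q : Fin n → SDom g),
        ((B.tree (ω, q)).cost z : ℝ)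
          ≤ ∑ i, hitI (induce (Xof g z (qS q)) i (A.tree ω)) (qS q i) := by
      intro ω q
      have h1 := sim_cost (z := z) (hqsome q) (A.tree ω) (fun _ => false)
      rw [aOf_false g z (qS q)] at h1
      have h2 : ((B.tree (ω, q)).cost z : ℝ)
          ≤ ((∑ i, (if (fun _ : Fin n => false) i then 0 else
              if hitB (induce (Xof g z (qS q)) i (A.tree ω)) (qS q i) then 1 else 0) : ℕ) : ℝ) :=
        Nat.cast_le.2 h1
      refine le_trans h2 ?_
      rw [Nat.cast_sum]
      refine le_of_eq (Finset.sum_congr rfl fun i _ => ?_)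
      rw [if_neg (by simp : ¬((fun _ : Fin n => false) i = true))]
      rw [hitI]
      by_cases hh : hitB (induce (Xof g z (qS q)) i (A.tree ω)) (qS q i) = true
      · rw [if_pos hh, if_pos hh]; norm_num
      · rw [if_neg hh, if_neg hh]; norm_num
    set S1 : ℝ := ∑ ω, A.p ω * ∑ q : Fin n → SDom g, (∏ i, μ (q i)) *
      (∑ i, hitI (induce (Xof g z (qS q)) i (A.tree ω)) (qS q i)) with hS1
    set S2 : ℝ := ∑ ω, A.p ω * ∑ q : Fin n → SDom g, (∏ i, μ (q i)) *
      (((A.tree ω).cost (Xof g z (qS q)) : ℝ)) with hS2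
    have hBS1 : B.expCost z ≤ S1 := by
      rw [hexp, hS1]
      refine Finset.sum_le_sum fun ω _ => ?_
      rw [Finset.mul_sum]
      refine Finset.sum_le_sum fun q _ => ?_
      rw [← mul_assoc]
      exact mul_le_mul_of_nonneg_left (hcostb ω q)
        (mul_nonneg (A.nonneg ω) (hprodnn q))
    have hS1S2 : RS g * S1 ≤ S2 := by
      rw [hS1, hS2, Finset.mul_sum]
      refine Finset.sum_le_sum fun ω _ => ?_
      rw [mul_left_comm]
      refine mul_le_mul_of_nonneg_left ?_ (A.nonneg ω)
      -- per ω
      have hsw : (∑ q : Fin n → SDom g, (∏ i, μ (q i)) *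
            (∑ i, hitI (induce (Xof g z (qS q)) i (A.tree ω)) (qS q i)))
          = ∑ i : Fin n, ∑ q : Fin n → SDom g, (∏ i', μ (q i')) *
            hitI (induce (Xof g z (qS q)) i (A.tree ω)) (qS q i) := by
        rw [Finset.sum_comm]
        exact Finset.sum_congr rfl fun q _ => Finset.mul_sum _ _ _
      rw [hsw, Finset.mul_sum]
      have hkey : ∀ i : Fin n, RS g * ∑ q : Fin n → SDom g, (∏ i', μ (q i')) *
            hitI (induce (Xof g z (qS q)) i (A.tree ω)) (qS q i)
          ≤ ∑ q : Fin n → SDom g, (∏ i', μ (q i')) *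
            (((induce (Xof g z (qS q)) i (A.tree ω)).cost (qS q i) : ℝ)) :=
        fun i => split_dual μ hμ0 hdual z i (A.tree ω)
      refine le_trans (Finset.sum_le_sum fun i _ => hkey i) ?_
      rw [Finset.sum_comm]
      refine Finset.sum_le_sum fun q _ => ?_
      rw [← Finset.mul_sum]
      refine mul_le_mul_of_nonneg_left ?_ (hprodnn q)
      have hC1 := induce_cost_sum (Xof g z (qS q)) (qS q)
        (fun i j c hc => pick_bit (hqsome q i) (z i) hc) (A.tree ω)
      calc (∑ i, (((induce (Xof g z (qS q)) i (A.tree ω)).cost (qS q i) : ℝ)))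
          = ((∑ i, (induce (Xof g z (qS q)) i (A.tree ω)).cost (qS q i) : ℕ) : ℝ) := by
            rw [Nat.cast_sum]
        _ ≤ _ := Nat.cast_le.2 hC1
    have hS2T : S2 ≤ T := by
      rw [hS2]
      have hAexp : ∀ y : Fin n × Fin m → Bool,
          A.expCost y = ∑ ω, A.p ω * ((A.tree ω).cost y : ℝ) := fun y => rfl
      calc ∑ ω, A.p ω * ∑ q : Fin n → SDom g, (∏ i, μ (q i)) *
            (((A.tree ω).cost (Xof g z (qS q)) : ℝ))
          = ∑ ω, ∑ q : Fin n → SDom g, A.p ω *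
              ((∏ i, μ (q i)) * (((A.tree ω).cost (Xof g z (qS q)) : ℝ))) :=
            Finset.sum_congr rfl fun ω _ => Finset.mul_sum _ _ _
        _ = ∑ q : Fin n → SDom g, ∑ ω, A.p ω *
              ((∏ i, μ (q i)) * (((A.tree ω).cost (Xof g z (qS q)) : ℝ))) := Finset.sum_comm
        _ = ∑ q : Fin n → SDom g, (∏ i, μ (q i)) *
              ∑ ω, A.p ω * (((A.tree ω).cost (Xof g z (qS q)) : ℝ)) := by
            refine Finset.sum_congr rfl fun q _ => ?_
            rw [Finset.mul_sum]
            exact Finset.sum_congr rfl fun ω _ => by ring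
        _ = ∑ q : Fin n → SDom g, (∏ i, μ (q i)) * A.expCost (Xof g z (qS q)) :=
            Finset.sum_congr rfl fun q _ => by rw [hAexp]
        _ ≤ ∑ q : Fin n → SDom g, (∏ i, μ (q i)) * T := by
            refine Finset.sum_le_sum fun q _ => ?_
            refine mul_le_mul_of_nonneg_left ?_ (hprodnn q)
            refine hAe _ ?_
            rw [hpc q]
            exact hz
        _ = T := by rw [← Finset.sum_mul, hsum1, one_mul]
    have hfin : RS g * B.expCost z ≤ T :=
      le_trans (mul_le_mul_of_nonneg_left hBS1 hRS.le) (le_trans hS1S2 hS2T)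
    rw [le_div_iff₀ hRS, mul_comm]
    exact hfin
  have hRb : Rbar ε f ≤ T / RS g := by
    rw [show Rbar ε f = sInf {T : ℝ | 0 ≤ T ∧ ∃ A : RandAlg (Fin n) Bool Bool,
      A.Computes f ε ∧ A.ECostLe f T} from rfl]
    exact csInf_le (Rbar_bddBelow ε f) ⟨div_nonneg hT0 hRS.le, B, hBc, hBe⟩
  calc Rbar ε f * RS g ≤ (T / RS g) * RS g := mul_le_mul_of_nonneg_right hRb hRS.le
    _ = T := div_mul_cancel₀ T (ne_of_gt hRS)
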